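/- For u ∈ (0,1), let a = √(1/u² - 1), b ∈ (0,1), σ ∈ (0, 1/2), c = √(a² + b²). Define U(a,b) = ([a² + 1 - 4b(√(a²+b²) - b)]^{-σ} - (a²+1)^{-σ}) / √(a²+b²). Then there is an absolute constant C > 0 such that U(a,b) ≤ C · u² · (1 - b²)^{-σ}. -/

import Mathlib

open Real

set_option maxHeartbeats 1000000 in
theorem U_bound :
    ∃ C : ℝ, 0 < C ∧
      ∀ u b σ : ℝ, 0 < u → u < 1 → 0 < b → b < 1 → 0 < σ → σ < 1/2 →
        let a := Real.sqrt (1 / u ^ 2 - 1)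
        ((a ^ 2 + 1 - 4 * b * (Real.sqrt (a ^ 2 + b ^ 2) - b)) ^ (-σ)
            - (a ^ 2 + 1) ^ (-σ)) / Real.sqrt (a ^ 2 + b ^ 2) ≤
          C * u ^ 2 * (1 - b ^ 2) ^ (-σ) := by
  refine ⟨4, by norm_num, fun u b σ hu hu1 hb hb1 hσ hσ2 => ?_⟩
  intro a
  have h1u : (0:ℝ) ≤ 1 / u ^ 2 - 1 := by
    rw [le_sub_iff_add_le, zero_add, le_div_iff₀ (by positivity)]
    nlinarith
  have ha2 : a ^ 2 = 1 / u ^ 2 - 1 := Real.sq_sqrt h1u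
  set c := Real.sqrt (a ^ 2 + b ^ 2) with hc
  have hcpos : 0 < c := Real.sqrt_pos.mpr (by positivity)
  have hc2 : c ^ 2 = a ^ 2 + b ^ 2 := Real.sq_sqrt (by positivity)
  set Υ := a ^ 2 + 1 - 4 * b * (c - b) with hΥ
  clear_value a c Υ
  have hu2c2 : u ^ 2 * c ^ 2 = 1 - u ^ 2 + u ^ 2 * b ^ 2 := by
    rw [hc2, ha2]; field_simp
  have hb2 : (0:ℝ) < 1 - b ^ 2 := by nlinarith
  have hΥlb : 1 - b ^ 2 ≤ Υ := by nlinarith [sq_nonneg (c - 2*b)]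
  have hΥpos : 0 < Υ := lt_of_lt_of_le hb2 hΥlb
  have hcb : b ≤ c := by nlinarith [sq_nonneg a]
  have hbc : b ≤ u * c := by
    have hsq : b ^ 2 ≤ (u * c) ^ 2 := by
      nlinarith [hu2c2, mul_nonneg (by nlinarith : (0:ℝ) ≤ 1 - u^2) hb2.le]
    nlinarith [hsq, mul_pos hu hcpos, show (0:ℝ) < b + u * c by positivity]
  -- key : u b (c-b) ≤ 1 - u
  have hkey : u * (b * (c - b)) ≤ 1 - u := by
    nlinarith [mul_nonneg (mul_nonneg hu.le (sub_nonneg.2 hcb)) (sub_nonneg.2 hbc), hu2c2]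
  have hUval : u ^ 2 * Υ = 1 - 4 * u ^ 2 * (b * (c - b)) := by
    rw [hΥ, ha2]; field_simp; ring
  have hkey2 : (1 - 2*u) ^ 2 ≤ u ^ 2 * Υ := by
    rw [hUval]; nlinarith
  set t := |1 - 2*u| with ht
  have ht0 : 0 ≤ t := abs_nonneg _
  have ht1 : t ≤ 1 := by rw [ht, abs_le]; constructor <;> nlinarith
  -- Step A : t * Υ^(-σ) ≤ (a^2+1)^(-σ)
  have h4 : (u^2 * Υ) ^ σ * Υ ^ (-σ) = (u^2) ^ σ := by
    rw [Real.mul_rpow (sq_nonneg u) hΥpos.le, mul_assoc, ← Real.rpow_add hΥpos,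
      add_neg_cancel, Real.rpow_zero, mul_one]
  have h5 : (a^2 + 1) ^ (-σ) = (u^2) ^ σ := by
    have h51 : a ^ 2 + 1 = (u^2)⁻¹ := by rw [ha2]; field_simp; ring
    rw [h51, Real.rpow_neg (by positivity), Real.inv_rpow (by positivity), inv_inv]
  have h2 : t ^ (2*σ : ℝ) = ((1-2*u)^2) ^ σ := by
    rw [show ((1-2*u)^2 : ℝ) = t^2 by rw [sq_abs],
      ← Real.rpow_natCast t 2, ← Real.rpow_mul ht0]
    norm_num
  have hA : t * Υ ^ (-σ) ≤ (a^2 + 1) ^ (-σ) := by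
    have h3 : ((1-2*u)^2) ^ σ ≤ (u^2 * Υ) ^ σ :=
      Real.rpow_le_rpow (sq_nonneg _) hkey2 hσ.le
    have h1 : t * Υ ^ (-σ) ≤ t ^ (2*σ : ℝ) * Υ ^ (-σ) := by
      rcases eq_or_lt_of_le ht0 with h | h
      · rw [← h, Real.zero_rpow (by positivity)]
      · have h9 : t ^ (1:ℝ) ≤ t ^ (2*σ : ℝ) :=
          Real.rpow_le_rpow_of_exponent_ge h ht1 (by linarith)
        rw [Real.rpow_one] at h9
        exact mul_le_mul_of_nonneg_right h9 (Real.rpow_nonneg hΥpos.le _)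

    calc t * Υ ^ (-σ) ≤ t ^ (2*σ:ℝ) * Υ ^ (-σ) := h1
      _ = ((1-2*u)^2) ^ σ * Υ ^ (-σ) := by rw [h2]
      _ ≤ (u^2*Υ) ^ σ * Υ ^ (-σ) :=
          mul_le_mul_of_nonneg_right h3 (Real.rpow_nonneg hΥpos.le _)
      _ = (u^2) ^ σ := h4
      _ = (a^2+1) ^ (-σ) := h5.symm
  -- Step B : Υ^(-σ) ≤ (1-b²)^(-σ)
  have hB : Υ ^ (-σ) ≤ (1 - b^2) ^ (-σ) :=
    Real.rpow_le_rpow_of_nonpos hb2 hΥlb (by linarith)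
  -- numerator bound
  have hP0 : 0 ≤ (1 - b^2 : ℝ) ^ (-σ) := Real.rpow_nonneg hb2.le _
  have hC : Υ ^ (-σ) - (a^2+1) ^ (-σ) ≤ (1 - t) * (1 - b^2) ^ (-σ) := by
    have := mul_le_mul_of_nonneg_left hB (by linarith : (0:ℝ) ≤ 1 - t)
    nlinarith [hA]
  -- c lower bound
  have hclb : Real.sqrt (1 - u) / u ≤ c := by
    rw [div_le_iff₀ hu]
    have h6 : Real.sqrt (1-u) ^ 2 = 1 - u := Real.sq_sqrt (by linarith)
    nlinarith [Real.sqrt_nonneg (1-u), mul_pos hcpos hu]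
  have hsu : 1 - u ≤ Real.sqrt (1 - u) := by
    have hs2 : Real.sqrt (1-u) ^ 2 = 1 - u := Real.sq_sqrt (by linarith)
    have hs1 : Real.sqrt (1-u) ≤ 1 := Real.sqrt_le_one.mpr (by linarith)
    nlinarith [Real.sqrt_nonneg (1-u),
      mul_nonneg (Real.sqrt_nonneg (1-u)) (sub_nonneg.2 hs1)]
  have habs : 1 - t ≤ 4 * u * (1 - u) := by
    rcases abs_cases (1 - 2*u) with ⟨h, _⟩ | ⟨h, _⟩ <;> rw [ht, h] <;> nlinarith
  have hfinal : 1 - t ≤ 4 * u^2 * c := by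
    have h7 : Real.sqrt (1-u) ≤ u * c := by
      rw [← div_le_iff₀' hu]; exact hclb
    nlinarith [mul_le_mul_of_nonneg_left hsu (by linarith : (0:ℝ) ≤ 4*u),
      mul_le_mul_of_nonneg_left h7 (by linarith : (0:ℝ) ≤ 4*u)]
  rw [div_le_iff₀ hcpos]
  calc Υ ^ (-σ) - (a^2+1) ^ (-σ) ≤ (1 - t) * (1 - b^2) ^ (-σ) := hC
    _ ≤ (4 * u^2 * c) * (1 - b^2) ^ (-σ) := mul_le_mul_of_nonneg_right hfinal hP0
    _ = 4 * u^2 * (1 - b^2) ^ (-σ) * c := by ring
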